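/- For all real κ with 16κ² < 1, κ² ₄F₃[1,1,3/2,3/2; 2,2,2; 16κ²] = 1/2 - (1/π) E(4κ) - κ² ₄F₃[1/2,1,1,3/2; 2,2,2; 16κ²], where E(k) = ∫₀^{π/2} √(1-k²sin²θ) dθ is the complete elliptic integral of the second kind. -/

import Mathlib

open Real

/-- Rising factorial (Pochhammer symbol) `(a)_n` on the reals. -/
noncomputable def poch (a : ℝ) (n : ℕ) : ℝ := (ascPochhammer ℝ n).eval a

/-- Generalized hypergeometric series ₄F₃. -/
noncomputable def F43 (a1 a2 a3 a4 b1 b2 b3 x : ℝ) : ℝ :=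
  ∑' n : ℕ, (poch a1 n * poch a2 n * poch a3 n * poch a4 n) /
    (poch b1 n * poch b2 n * poch b3 n * (n.factorial : ℝ)) * x ^ n

/-- Generalized hypergeometric series ₃F₂. -/
noncomputable def F32 (a1 a2 a3 b1 b2 x : ℝ) : ℝ :=
  ∑' n : ℕ, (poch a1 n * poch a2 n * poch a3 n) /
    (poch b1 n * poch b2 n * (n.factorial : ℝ)) * x ^ n

/-- Gaussian hypergeometric series ₂F₁. -/
noncomputable def F21 (a1 a2 b1 x : ℝ) : ℝ :=
  ∑' n : ℕ, (poch a1 n * poch a2 n) /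
    (poch b1 n * (n.factorial : ℝ)) * x ^ n

/-- Complete elliptic integral of the first kind. -/
noncomputable def ellipticK (k : ℝ) : ℝ :=
  ∫ θ in (0:ℝ)..(π/2), 1 / Real.sqrt (1 - (k * Real.sin θ) ^ 2)

/-- Complete elliptic integral of the second kind. -/
noncomputable def ellipticE (k : ℝ) : ℝ :=
  ∫ θ in (0:ℝ)..(π/2), Real.sqrt (1 - (k * Real.sin θ) ^ 2)


-- Auxiliary development
noncomputable def tt (n : ℕ) : ℝ := poch (1/2) n / n.factorial
noncomputable def aa (n : ℕ) : ℝ := poch (-(1/2)) n / n.factorial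

lemma poch_zero (a : ℝ) : poch a 0 = 1 := by simp [poch]

lemma poch_succ (a : ℝ) (n : ℕ) : poch a (n+1) = poch a n * (a + n) :=
  ascPochhammer_succ_eval n a

lemma poch_one (n : ℕ) : poch 1 n = n.factorial := ascPochhammer_eval_one ℝ n

lemma poch_two (n : ℕ) : poch 2 n = (n+1).factorial := by
  induction n with
  | zero => simp [poch]
  | succ n ih =>
    rw [poch_succ, ih, Nat.factorial_succ]
    push_cast [Nat.factorial_succ]
    ring

lemma poch_half_pos (n : ℕ) : 0 < poch (1/2) n :=
  ascPochhammer_pos n _ (by norm_num)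

lemma poch_32 (n : ℕ) : poch (3/2) n = (2*n+1) * poch (1/2) n := by
  induction n with
  | zero => simp [poch]
  | succ n ih =>
    rw [poch_succ, poch_succ, ih]
    push_cast
    ring

lemma poch_neg_half_succ (n : ℕ) : poch (-(1/2)) (n+1) = -(1/2) * poch (1/2) n := by
  unfold poch
  rw [ascPochhammer_succ_left, Polynomial.eval_mul, Polynomial.eval_comp]
  norm_num

lemma fact_pos (n : ℕ) : (0:ℝ) < n.factorial := by positivity

lemma fact_succ (n : ℕ) : ((n+1).factorial : ℝ) = (n+1) * n.factorial := by
  rw [Nat.factorial_succ]; push_cast; ring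

lemma tt_zero : tt 0 = 1 := by simp [tt, poch_zero]

lemma aa_zero : aa 0 = 1 := by simp [aa, poch]

lemma tt_pos (n : ℕ) : 0 < tt n := div_pos (poch_half_pos n) (fact_pos n)

lemma tt_succ (n : ℕ) : tt (n+1) = tt n * ((1/2 + n)/(n+1)) := by
  unfold tt
  rw [poch_succ, fact_succ, div_mul_div_comm, mul_comm ((n:ℝ)+1) (n.factorial : ℝ)]

lemma tt_succ_le (n : ℕ) : tt (n+1) ≤ tt n := by
  rw [tt_succ]
  nth_rewrite 2 [← mul_one (tt n)]
  refine mul_le_mul_of_nonneg_left ?_ (tt_pos n).le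
  rw [div_le_one (by positivity)]
  linarith

lemma tt_le_one (n : ℕ) : tt n ≤ 1 := by
  induction n with
  | zero => simp [tt_zero]
  | succ n ih => exact (tt_succ_le n).trans ih

lemma aa_succ (n : ℕ) : aa (n+1) = tt (n+1) - tt n := by
  unfold aa tt
  rw [poch_neg_half_succ, poch_succ, fact_succ]
  have h1 := fact_pos n
  field_simp
  ring

lemma aa_succ_nonpos (n : ℕ) : aa (n+1) ≤ 0 := by
  rw [aa_succ]; linarith [tt_succ_le n]

lemma abs_aa_succ (n : ℕ) : |aa (n+1)| = tt n - tt (n+1) := by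
  rw [abs_of_nonpos (aa_succ_nonpos n), aa_succ]; ring

lemma sum_abs_aa_le (N : ℕ) : ∑ n ∈ Finset.range N, |aa (n+1)| ≤ 1 := by
  have : ∑ n ∈ Finset.range N, |aa (n+1)| = tt 0 - tt N := by
    rw [← Finset.sum_range_sub' tt N]
    exact Finset.sum_congr rfl fun i _ => abs_aa_succ i
  rw [this, tt_zero]
  linarith [tt_pos N]

lemma summable_abs_aa : Summable (fun n => |aa n|) := by
  rw [← summable_nat_add_iff 1]
  exact summable_of_sum_range_le (fun n => abs_nonneg _) sum_abs_aa_le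

lemma aa_eq_choose (n : ℕ) : aa n = (-1)^n * Ring.choose (1/2 : ℝ) n := by
  unfold aa poch
  rw [show (-(1/2) : ℝ) = -(1/2 : ℝ) by norm_num,
    ← Polynomial.ascPochhammer_smeval_eq_eval,
    Polynomial.ascPochhammer_smeval_neg_eq_descPochhammer,
    Ring.descPochhammer_eq_factorial_smul_choose, nsmul_eq_mul]
  rw [Units.smul_def, Int.coe_negOnePow_natCast, zsmul_eq_mul, Int.cast_pow, Int.cast_neg,
    Int.cast_one, mul_comm ((n.factorial : ℝ)) _, mul_div_assoc]
  rw [mul_div_assoc, div_self (fact_pos n).ne', mul_one]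

lemma vandermonde (n : ℕ) :
    ∑ ij ∈ Finset.HasAntidiagonal.antidiagonal n, aa ij.1 * aa ij.2
      = (-1)^n * (Nat.choose 1 n : ℝ) := by
  have h : ∑ ij ∈ Finset.HasAntidiagonal.antidiagonal n, aa ij.1 * aa ij.2
      = (-1)^n * ∑ ij ∈ Finset.HasAntidiagonal.antidiagonal n,
          Ring.choose (1/2 : ℝ) ij.1 * Ring.choose (1/2 : ℝ) ij.2 := by
    rw [Finset.mul_sum]
    refine Finset.sum_congr rfl fun ij hij => ?_
    rw [aa_eq_choose, aa_eq_choose]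
    have := Finset.HasAntidiagonal.mem_antidiagonal.mp hij
    rw [← this, pow_add]
    ring
  rw [h, ← Ring.add_choose_eq n (Commute.all _ _)]
  have : ((1/2 : ℝ) + 1/2) = ((1:ℕ) : ℝ) := by norm_num
  rw [this, Ring.choose_natCast]

section SqrtSeries
variable {u : ℝ} (h0 : 0 ≤ u) (h1 : u ≤ 1)

include h0 h1 in
lemma summable_norm_aa_mul : Summable (fun n => ‖aa n * u ^ n‖) := by
  refine Summable.of_nonneg_of_le (fun n => norm_nonneg _) (fun n => ?_) summable_abs_aa
  rw [norm_mul, norm_pow]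
  calc ‖aa n‖ * ‖u‖ ^ n ≤ ‖aa n‖ * 1 := by
        refine mul_le_mul_of_nonneg_left ?_ (norm_nonneg _)
        exact pow_le_one₀ (norm_nonneg u) (by rwa [Real.norm_of_nonneg h0])
    _ = |aa n| := by rw [mul_one, Real.norm_eq_abs]

include h0 h1 in
lemma summable_aa_mul : Summable (fun n => aa n * u ^ n) :=
  (summable_norm_aa_mul h0 h1).of_norm

include h0 h1 in
lemma sq_series : (∑' n : ℕ, aa n * u ^ n) * (∑' n : ℕ, aa n * u ^ n) = 1 - u := by
  rw [tsum_mul_tsum_eq_tsum_sum_antidiagonal_of_summable_norm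
    (summable_norm_aa_mul h0 h1) (summable_norm_aa_mul h0 h1)]
  have hterm : ∀ n : ℕ, ∑ kl ∈ Finset.HasAntidiagonal.antidiagonal n, (aa kl.1 * u ^ kl.1) * (aa kl.2 * u ^ kl.2)
      = ((-1)^n * (Nat.choose 1 n : ℝ)) * u ^ n := by
    intro n
    rw [← vandermonde, Finset.sum_mul]
    refine Finset.sum_congr rfl fun kl hkl => ?_
    have hm := Finset.HasAntidiagonal.mem_antidiagonal.mp hkl
    rw [← hm, pow_add]
    ring
  rw [tsum_congr hterm, tsum_eq_sum (s := Finset.range 2) ?_]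
  · rw [Finset.sum_range_succ, Finset.sum_range_succ]
    norm_num
    ring
  · intro b hb
    have hb2 : 2 ≤ b := by have := Finset.mem_range.not.mp hb; omega
    rw [Nat.choose_eq_zero_of_lt (by omega)]
    simp

include h0 h1 in
lemma series_nonneg : 0 ≤ ∑' n : ℕ, aa n * u ^ n := by
  rw [(summable_aa_mul h0 h1).tsum_eq_zero_add]
  have habs : |∑' n : ℕ, aa (n+1) * u ^ (n+1)| ≤ 1 := by
    have h2 : ∀ N, ∑ n ∈ Finset.range N, |aa (n+1) * u ^ (n+1)| ≤ 1 := by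
      intro N
      refine le_trans (Finset.sum_le_sum (fun i _ => ?_)) (sum_abs_aa_le N)
      rw [abs_mul]
      calc |aa (i+1)| * |u ^ (i+1)| ≤ |aa (i+1)| * 1 := by
            refine mul_le_mul_of_nonneg_left ?_ (abs_nonneg _)
            rw [abs_pow]
            exact pow_le_one₀ (abs_nonneg u) (by rwa [abs_of_nonneg h0])
        _ = |aa (i+1)| := mul_one _
    calc |∑' n : ℕ, aa (n+1) * u ^ (n+1)| ≤ ∑' n : ℕ, |aa (n+1) * u ^ (n+1)| := by
          have hs : Summable fun n : ℕ => ‖aa (n+1) * u ^ (n+1)‖ :=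
            (summable_nat_add_iff 1).mpr (summable_norm_aa_mul h0 h1)
          simpa only [Real.norm_eq_abs] using norm_tsum_le_tsum_norm hs
      _ ≤ 1 := Real.tsum_le_of_sum_range_le (fun n => abs_nonneg _) h2
  have := abs_le.mp habs
  rw [aa_zero, pow_zero, mul_one]
  linarith [this.1]

include h0 h1 in
lemma sqrt_series : ∑' n : ℕ, aa n * u ^ n = Real.sqrt (1 - u) := by
  rw [← sq_series h0 h1, Real.sqrt_mul_self (series_nonneg h0 h1)]

end SqrtSeries

lemma prod_eq_tt (n : ℕ) :
    ∏ i ∈ Finset.range n, (2*(i:ℝ)+1)/(2*i+2) = tt n := by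
  induction n with
  | zero => simp [tt_zero]
  | succ n ih =>
    rw [Finset.prod_range_succ, ih, tt_succ]
    congr 1
    rw [div_eq_div_iff (by positivity) (by positivity)]
    ring

lemma integral_sin_half (m : ℕ) :
    ∫ θ in (0:ℝ)..(π/2), sin θ ^ (2*m) = π/2 * tt m := by
  have hint : ∀ a b : ℝ, IntervalIntegrable (fun x => sin x ^ (2*m)) MeasureTheory.volume a b :=
    fun a b => (Continuous.pow (Real.continuous_sin) _).intervalIntegrable a b
  have hsym : ∫ x in (π/2)..π, sin x ^ (2*m) = ∫ x in (0:ℝ)..(π/2), sin x ^ (2*m) := by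
    have h := intervalIntegral.integral_comp_sub_left (a := 0) (b := π/2)
      (fun x => sin x ^ (2*m)) π
    have h2 : ∀ x : ℝ, sin (π - x) ^ (2*m) = sin x ^ (2*m) := by
      intro x; rw [Real.sin_pi_sub]
    simp only [h2] at h
    rw [h]
    norm_num [show π - π/2 = π/2 by ring]
  have hadd : (∫ x in (0:ℝ)..(π/2), sin x ^ (2*m)) + ∫ x in (π/2)..π, sin x ^ (2*m)
      = ∫ x in (0:ℝ)..π, sin x ^ (2*m) :=
    intervalIntegral.integral_add_adjacent_intervals (hint _ _) (hint _ _)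
  have := integral_sin_pow_even m
  rw [prod_eq_tt] at this
  rw [hsym] at hadd
  linarith

lemma ellipticE_eq {k : ℝ} (hk : k^2 ≤ 1) :
    ellipticE k = π/2 * ∑' n : ℕ, aa n * tt n * (k^2)^n := by
  have hk0 : (0:ℝ) ≤ k^2 := sq_nonneg k
  have hintegrand : ∀ θ : ℝ, Real.sqrt (1 - (k * Real.sin θ) ^ 2)
      = ∑' n : ℕ, aa n * (k^2)^n * sin θ ^ (2*n) := by
    intro θ
    have hs2 : Real.sin θ ^ 2 ≤ 1 := by
      rw [sq_le_one_iff_abs_le_one]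
      exact abs_sin_le_one θ
    have h0 : 0 ≤ (k * Real.sin θ)^2 := sq_nonneg _
    have h1 : (k * Real.sin θ)^2 ≤ 1 := by
      rw [mul_pow]
      calc k^2 * sin θ^2 ≤ k^2 * 1 := mul_le_mul_of_nonneg_left hs2 hk0
        _ ≤ 1 := by rwa [mul_one]
    rw [← sqrt_series h0 h1]
    refine tsum_congr fun n => ?_
    rw [mul_pow, mul_pow, pow_mul, mul_assoc, ← pow_mul]
  have hle : (0:ℝ) ≤ π/2 := by positivity
  unfold ellipticE
  simp only [hintegrand]
  rw [intervalIntegral.integral_of_le hle]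
  set μ := MeasureTheory.volume.restrict (Set.Ioc (0:ℝ) (π/2))
  have hswap : ∫ θ, (∑' n : ℕ, aa n * (k^2)^n * sin θ ^ (2*n)) ∂μ
      = ∑' n : ℕ, ∫ θ, aa n * (k^2)^n * sin θ ^ (2*n) ∂μ := by
    refine MeasureTheory.integral_tsum (fun n => ((continuous_const.mul
      ((Real.continuous_sin).pow _)).aestronglyMeasurable)) ?_
    have hbound : ∀ n : ℕ, ∫⁻ θ, ‖aa n * (k^2)^n * sin θ ^ (2*n)‖₊ ∂μ
        ≤ ‖aa n‖₊ * ENNReal.ofReal (π/2) := by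
      intro n
      have hptwise : ∀ θ : ℝ, (‖aa n * (k^2)^n * sin θ ^ (2*n)‖₊ : ENNReal) ≤ ‖aa n‖₊ := by
        intro θ
        have hr : ‖aa n * (k^2)^n * sin θ ^ (2*n)‖ ≤ ‖aa n‖ := by
          rw [norm_mul, norm_mul]
          have e1 : ‖(k^2)^n‖ ≤ 1 := by
            rw [Real.norm_of_nonneg (by positivity)]
            exact pow_le_one₀ hk0 hk
          have e2 : ‖sin θ ^ (2*n)‖ ≤ 1 := by
            rw [norm_pow, Real.norm_eq_abs]
            exact pow_le_one₀ (abs_nonneg _) (abs_sin_le_one θ)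
          calc ‖aa n‖ * ‖(k^2)^n‖ * ‖sin θ ^ (2*n)‖
              ≤ ‖aa n‖ * 1 * 1 := by
                refine mul_le_mul (mul_le_mul le_rfl e1 (norm_nonneg _) (norm_nonneg _)) e2
                  (norm_nonneg _) (by positivity)
            _ = ‖aa n‖ := by ring
        exact ENNReal.coe_le_coe.mpr (by exact_mod_cast hr)
      calc ∫⁻ θ, ‖aa n * (k^2)^n * sin θ ^ (2*n)‖₊ ∂μ
          ≤ ∫⁻ _, (‖aa n‖₊ : ENNReal) ∂μ := MeasureTheory.lintegral_mono fun θ => hptwise θ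
        _ = ‖aa n‖₊ * ENNReal.ofReal (π/2) := by
            rw [MeasureTheory.lintegral_const]
            congr 1
            simp [μ, Real.volume_Ioc]
    rw [← lt_top_iff_ne_top]
    calc ∑' n : ℕ, ∫⁻ θ, ‖aa n * (k^2)^n * sin θ ^ (2*n)‖₊ ∂μ
        ≤ ∑' n : ℕ, (‖aa n‖₊ : ENNReal) * ENNReal.ofReal (π/2) :=
          ENNReal.tsum_le_tsum hbound
      _ = (∑' n : ℕ, (‖aa n‖₊ : ENNReal)) * ENNReal.ofReal (π/2) := ENNReal.tsum_mul_right
      _ < ⊤ := by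
          refine ENNReal.mul_lt_top ?_ (by simp)
          rw [lt_top_iff_ne_top, ENNReal.tsum_coe_ne_top_iff_summable]
          rw [← NNReal.summable_coe]
          simpa [Real.norm_eq_abs] using summable_abs_aa
  rw [hswap]
  have hval : ∀ n : ℕ, ∫ θ, aa n * (k^2)^n * sin θ ^ (2*n) ∂μ
      = aa n * tt n * (k^2)^n * (π/2) := by
    intro n
    have : ∫ θ, aa n * (k^2)^n * sin θ ^ (2*n) ∂μ
        = ∫ θ in (0:ℝ)..(π/2), aa n * (k^2)^n * sin θ ^ (2*n) := by
      rw [intervalIntegral.integral_of_le hle]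
    rw [this, intervalIntegral.integral_const_mul, integral_sin_half]
    ring
  simp only [hval]
  rw [tsum_mul_right, mul_comm]

lemma poch_half_le (n : ℕ) : poch (1/2) n ≤ n.factorial := by
  induction n with
  | zero => simp [poch]
  | succ n ih =>
    rw [poch_succ, fact_succ]
    calc poch (1/2) n * (1/2 + n) ≤ (n.factorial : ℝ) * (n + 1) := by
          refine mul_le_mul ih (by linarith) (by linarith [Nat.cast_nonneg (α := ℝ) n])
            (fact_pos n).le
      _ = (n+1) * n.factorial := by ring

lemma key_term (κ : ℝ) (n : ℕ) :
    κ^2 * ((poch 1 n * poch 1 n * poch (3/2) n * poch (3/2) n) /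
        (poch 2 n * poch 2 n * poch 2 n * (n.factorial : ℝ)) * (16*κ^2) ^ n)
    = (-(1/2)) * (aa (n+1) * tt (n+1) * (16*κ^2) ^ (n+1))
      - κ^2 * ((poch (1/2) n * poch 1 n * poch 1 n * poch (3/2) n) /
        (poch 2 n * poch 2 n * poch 2 n * (n.factorial : ℝ)) * (16*κ^2) ^ n) := by
  unfold aa tt
  rw [poch_neg_half_succ, poch_succ, poch_one, poch_two, poch_32, fact_succ, pow_succ]
  have hF := (fact_pos n).ne'
  have hn1 : ((n:ℝ) + 1) ≠ 0 := by positivity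
  field_simp
  ring


theorem stmt_9 (κ : ℝ) (h : 16 * κ ^ 2 < 1) :
    κ ^ 2 * F43 1 1 (3/2) (3/2) 2 2 2 (16 * κ ^ 2) =
      1/2 - (1/π) * ellipticE (4 * κ)
        - κ ^ 2 * F43 (1/2) 1 1 (3/2) 2 2 2 (16 * κ ^ 2) := by
  have hx0 : (0:ℝ) ≤ 16 * κ^2 := by positivity
  have hx1 : 16 * κ^2 < 1 := h
  -- summability of the E-series
  have hS1 : Summable (fun n : ℕ => aa n * tt n * (16*κ^2) ^ n) := by
    refine Summable.of_abs (Summable.of_nonneg_of_le (fun n => abs_nonneg _)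
      (fun n => ?_) summable_abs_aa)
    rw [abs_mul, abs_mul, abs_of_pos (tt_pos n), abs_pow, abs_of_nonneg hx0]
    calc |aa n| * tt n * (16*κ^2)^n ≤ |aa n| * 1 * 1 := by
          refine mul_le_mul (mul_le_mul le_rfl (tt_le_one n) (tt_pos n).le (abs_nonneg _))
            (pow_le_one₀ hx0 hx1.le) (by positivity) (by positivity)
      _ = |aa n| := by ring
  have hS2 : Summable (fun n : ℕ => (-(1/2:ℝ)) * (aa (n+1) * tt (n+1) * (16*κ^2) ^ (n+1))) :=
    ((summable_nat_add_iff 1).mpr hS1).mul_left _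
  have hS3 : Summable (fun n : ℕ => κ^2 * ((poch (1/2) n * poch 1 n * poch 1 n * poch (3/2) n) /
      (poch 2 n * poch 2 n * poch 2 n * (n.factorial : ℝ)) * (16*κ^2) ^ n)) := by
    refine Summable.of_abs (Summable.of_nonneg_of_le (fun n => abs_nonneg _) (fun n => ?_)
      (((summable_geometric_of_lt_one hx0 hx1).mul_left (κ^2)).abs))
    have hfrac0 : 0 ≤ (poch (1/2) n * poch 1 n * poch 1 n * poch (3/2) n) /
        (poch 2 n * poch 2 n * poch 2 n * (n.factorial : ℝ)) := by
      have h1 := poch_half_pos n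
      have h2 := fact_pos n
      rw [poch_one, poch_two, poch_32]
      positivity
    have hfrac1 : (poch (1/2) n * poch 1 n * poch 1 n * poch (3/2) n) /
        (poch 2 n * poch 2 n * poch 2 n * (n.factorial : ℝ)) ≤ 1 := by
      have hG := fact_pos (n+1)
      have hF := fact_pos n
      have hp := poch_half_pos n
      have hple := poch_half_le n
      have hden : (0:ℝ) < ((n+1).factorial : ℝ) * (n+1).factorial * (n+1).factorial
          * n.factorial := by positivity
      rw [poch_one, poch_two, poch_32, div_le_one hden, fact_succ]
      have h1 : poch (1/2) n * (2 * n + 1) * poch (1/2) n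
          ≤ (n.factorial : ℝ) * (2 * n + 1) * n.factorial := by
        have := mul_le_mul hple hple hp.le hF.le
        nlinarith [Nat.cast_nonneg (α := ℝ) n]
      have h2 : (2 * (n:ℝ) + 1) ≤ ((n:ℝ)+1) * ((n:ℝ)+1) * ((n:ℝ)+1) := by
        nlinarith [Nat.cast_nonneg (α := ℝ) n]
      nlinarith [mul_le_mul_of_nonneg_right h1 (mul_nonneg hF.le hF.le),
        mul_le_mul_of_nonneg_right h2
          (mul_nonneg (mul_nonneg hF.le hF.le) (mul_nonneg hF.le hF.le)),
        mul_pos hF hF, Nat.cast_nonneg (α := ℝ) n]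
    have hterm0 : 0 ≤ κ^2 * ((poch (1/2) n * poch 1 n * poch 1 n * poch (3/2) n) /
        (poch 2 n * poch 2 n * poch 2 n * (n.factorial : ℝ)) * (16*κ^2) ^ n) :=
      mul_nonneg (sq_nonneg κ) (mul_nonneg hfrac0 (pow_nonneg hx0 n))
    rw [abs_of_nonneg hterm0, abs_of_nonneg (mul_nonneg (sq_nonneg κ) (pow_nonneg hx0 n))]
    calc κ^2 * ((poch (1/2) n * poch 1 n * poch 1 n * poch (3/2) n) /
          (poch 2 n * poch 2 n * poch 2 n * (n.factorial : ℝ)) * (16*κ^2) ^ n)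
        ≤ κ^2 * (1 * (16*κ^2) ^ n) := by
          refine mul_le_mul_of_nonneg_left ?_ (sq_nonneg κ)
          exact mul_le_mul_of_nonneg_right hfrac1 (pow_nonneg hx0 n)
      _ = κ^2 * (16*κ^2) ^ n := by ring
  -- E-series
  have hk2 : (4*κ)^2 ≤ 1 := by nlinarith
  have hE := ellipticE_eq hk2
  have h16 : (4*κ)^2 = 16*κ^2 := by ring
  rw [h16] at hE
  have hSsplit : (∑' n : ℕ, aa n * tt n * (16*κ^2) ^ n)
      = 1 + ∑' n : ℕ, aa (n+1) * tt (n+1) * (16*κ^2) ^ (n+1) := by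
    rw [hS1.tsum_eq_zero_add]
    congr 1
    show aa 0 * tt 0 * (16*κ^2)^0 = 1
    simp [aa, tt, poch]
  have hpi : (1/π) * ellipticE (4*κ)
      = 1/2 + (1/2) * ∑' n : ℕ, aa (n+1) * tt (n+1) * (16*κ^2) ^ (n+1) := by
    rw [hE, hSsplit]
    field_simp
  rw [hpi]
  unfold F43
  rw [← tsum_mul_left, ← tsum_mul_left (a := κ^2)]
  rw [tsum_congr (fun n => key_term κ n), hS2.tsum_sub hS3]
  rw [tsum_mul_left (a := (-(1/2:ℝ)))]
  ring
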